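/- Let (b_1,…,b_r) be a T-chain with Hirzebruch–Jung continued fraction dn²/(dna−1) (d ≥ 1, 0 < a < n coprime) and suppose (−1 + t_1/n, …, −1 + t_r/n) is a discrepancy vector for it, where the t_i are integers with t_1 + t_r = n. Then the tuple (−1 + t_1/(n+t_1), −1 + t_2/(n+t_1), …, −1 + t_r/(n+t_1), −1 + (t_1+t_r)/(n+t_1)) is a discrepancy vector for the T-chain (b_1+1, b_2,…,b_r, 2), and the tuple (−1 + (t_1+t_r)/(n+t_r), −1 + t_1/(n+t_r), …, −1 + t_r/(n+t_r)) is a discrepancy vector for the T-chain (2, b_1,…,b_{r−1}, b_r+1). -/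

import Mathlib

/-- Hirzebruch–Jung continued fraction: `hjcf [b₁,…,b_r] = b₁ - 1/(b₂ - 1/(⋯ - 1/b_r))`.
(With the convention `hjcf [] = 0`, so that `hjcf [b] = b` since `1/0 = 0`.) -/
def hjcf : List ℚ → ℚ
  | [] => 0
  | b :: l => b - 1 / hjcf l

/-- Hirzebruch–Jung continued fraction of a list of integers. -/
def hjcfZ (b : List ℤ) : ℚ := hjcf (b.map (fun x => (x : ℚ)))

/-- `δ` is a discrepancy vector for the chain `b`. -/
def IsDiscrepancyVector (b : List ℤ) (δ : List ℚ) : Prop :=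
  δ.length = b.length ∧
    ∀ i < b.length,
      -((b.getD i 0 : ℚ)) * δ.getD i 0
          + (if i = 0 then 0 else δ.getD (i - 1) 0) + δ.getD (i + 1) 0
        = (b.getD i 0 : ℚ) - 2

/-- The operation `(b₁,…,b_r) ↦ (b₁+1, b₂,…,b_r, 2)`. -/
def addLeft (b : List ℤ) : List ℤ := b.modifyHead (· + 1) ++ [2]

/-- The operation `(b₁,…,b_r) ↦ (2, b₁,…,b_{r-1}, b_r+1)`. -/
def addRight (b : List ℤ) : List ℤ := 2 :: (b.reverse.modifyHead (· + 1)).reverse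

theorem myGetD_map (f : ℤ → ℚ) (l : List ℤ) (i : ℕ) :
    (l.map f).getD i 0 = if i < l.length then f (l.getD i 0) else 0 := by
  rcases lt_or_ge i l.length with h | h
  · simp [List.getD_eq_getElem, h]
  · rw [List.getD_eq_default, if_neg (not_lt.2 h)]
    simpa using h

theorem myGetD_append {α : Type*} [Inhabited α] (l : List α) (x d : α) (i : ℕ) :
    ((l ++ [x]).getD i d) = if i < l.length then l.getD i d
      else if i = l.length then x else d := by
  rcases lt_or_ge i l.length with h | h
  · rw [List.getD_eq_getElem _ _ (by simp; omega), List.getElem_append_left h, if_pos h,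
      List.getD_eq_getElem]
  · rw [if_neg (not_lt.2 h)]
    rcases eq_or_lt_of_le h with h' | h'
    · subst h'; simp [List.getD_eq_getElem]
    · rw [if_neg h'.ne', List.getD_eq_default]
      simpa using h'

theorem myGetD_reverse {α : Type*} [Inhabited α] (l : List α) (d : α) (i : ℕ) :
    (l.reverse).getD i d = if i < l.length then l.getD (l.length - 1 - i) d else d := by
  rcases lt_or_ge i l.length with h | h
  · rw [List.getD_eq_getElem _ _ (by simpa using h), List.getElem_reverse, if_pos h,
      List.getD_eq_getElem]
  · rw [if_neg (not_lt.2 h), List.getD_eq_default]; simpa using h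

theorem myGetD_modifyHead {α : Type*} [Inhabited α] (f : α → α) (l : List α) (d : α) (i : ℕ)
    (h0 : l ≠ []) :
    ((l.modifyHead f).getD i d) = if i = 0 then f (l.getD 0 d) else l.getD i d := by
  rcases l with _ | ⟨y, l⟩
  · simp at h0
  · rcases i with _ | i <;> simp [List.getD_cons_succ, List.getD_cons_zero]

theorem auxFwd (c x u v m : ℚ) (hm : m ≠ 0) (h : c * x = u + v) :
    -c * (-1 + x / m) + (-1 + u / m) + (-1 + v / m) = c - 2 := by
  linear_combination (-(1/m)) * h
theorem auxFwdL (c x v m : ℚ) (hm : m ≠ 0) (h : c * x = m + v) :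
    -c * (-1 + x / m) + 0 + (-1 + v / m) = c - 2 := by
  have hd := div_self hm
  linear_combination (-(1/m)) * h - hd
theorem auxFwdR (c x u m : ℚ) (hm : m ≠ 0) (h : c * x = u + m) :
    -c * (-1 + x / m) + (-1 + u / m) + 0 = c - 2 := by
  have hd := div_self hm
  linear_combination (-(1/m)) * h - hd
theorem auxBwd (c x u v m : ℚ) (hm : m ≠ 0)
    (h : -c * (-1 + x / m) + (-1 + u / m) + (-1 + v / m) = c - 2) : c * x = u + v := by
  have hd := div_self hm
  linear_combination (-m) * h - (c*x - u - v) * hd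
theorem auxBwdL (c x v m : ℚ) (hm : m ≠ 0)
    (h : -c * (-1 + x / m) + 0 + (-1 + v / m) = c - 2) : c * x = m + v := by
  have hd := div_self hm
  linear_combination (-m) * h - (c*x - v) * hd
theorem auxBwdR (c x u m : ℚ) (hm : m ≠ 0)
    (h : -c * (-1 + x / m) + (-1 + u / m) + 0 = c - 2) : c * x = u + m := by
  have hd := div_self hm
  linear_combination (-m) * h - (c*x - u) * hd
theorem auxBwdLR (c x m : ℚ) (hm : m ≠ 0)
    (h : -c * (-1 + x / m) + 0 + 0 = c - 2) : c * x = m + m := by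
  have hd := div_self hm
  linear_combination (-m) * h - (c*x) * hd

theorem chain_pos (r : ℕ) (B v : ℕ → ℚ) (hB : ∀ i < r, 2 ≤ B i)
    (h0 : 0 < v 0) (htop : ∀ k, r < k → 0 < v k)
    (hrec : ∀ i < r, B i * v (i + 1) = v i + v (i + 2)) :
    ∀ k, 0 < v k := by
  by_contra hc
  push_neg at hc
  obtain ⟨k0, hk0⟩ := hc
  have hex : ∃ k, v k ≤ 0 := ⟨k0, hk0⟩
  classical
  set i0 := Nat.find hex with hi0def
  have hspec : v i0 ≤ 0 := Nat.find_spec hex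
  have hmin : ∀ j < i0, 0 < v j := fun j hj => lt_of_not_ge (Nat.find_min hex hj)
  have h1 : 1 ≤ i0 := by
    rcases Nat.eq_zero_or_pos i0 with h | h
    · rw [h] at hspec; exact absurd hspec (not_le.2 h0)
    · exact h
  have h2 : i0 ≤ r := by
    by_contra h
    push_neg at h
    exact absurd hspec (not_le.2 (htop _ h))
  have key : ∀ dd, i0 + dd ≤ r + 1 → v (i0 + dd) ≤ 0 ∧ v (i0 + dd) ≤ v (i0 + dd - 1) := by
    intro dd
    induction dd with
    | zero =>
      intro _
      refine ⟨by simpa using hspec, ?_⟩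
      have := hmin (i0 - 1) (by omega)
      simp only [Nat.add_zero]
      exact hspec.trans this.le
    | succ dd ih =>
      intro hle
      obtain ⟨ih1, ih2⟩ := ih (by omega)
      have hj : i0 + dd - 1 < r := by omega
      have hrec' := hrec (i0 + dd - 1) hj
      rw [show i0 + dd - 1 + 1 = i0 + dd from by omega,
        show i0 + dd - 1 + 2 = i0 + dd + 1 from by omega] at hrec'
      have hBj := hB (i0 + dd - 1) hj
      have hstep : v (i0 + dd + 1) ≤ v (i0 + dd) := by nlinarith
      refine ⟨hstep.trans ih1, ?_⟩
      rw [show i0 + (dd + 1) = i0 + dd + 1 from by omega,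
        show i0 + dd + 1 - 1 = i0 + dd from by omega]
      exact hstep
  obtain ⟨hle, _⟩ := key (r + 1 - i0) (by omega)
  rw [show i0 + (r + 1 - i0) = r + 1 from by omega] at hle
  exact absurd hle (not_le.2 (htop _ (by omega)))

set_option maxHeartbeats 1600000 in
theorem stmt5 (d n a : ℤ) (hd : 1 ≤ d) (ha : 0 < a) (han : a < n)
    (hgcd : Int.gcd a n = 1)
    (b : List ℤ) (h2 : ∀ x ∈ b, 2 ≤ x)
    (hcf : hjcfZ b = ((d * n ^ 2 : ℤ) : ℚ) / ((d * n * a - 1 : ℤ) : ℚ))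
    (t : List ℤ) (hlen : t.length = b.length)
    (hδ : IsDiscrepancyVector b (t.map fun ti => -1 + (ti : ℚ) / (n : ℚ)))
    (hsum : t.getD 0 0 + t.getD (t.length - 1) 0 = n) :
    IsDiscrepancyVector (addLeft b)
        ((t.map fun ti => -1 + (ti : ℚ) / ((n : ℚ) + (t.getD 0 0 : ℚ))) ++
          [-1 + ((t.getD 0 0 : ℚ) + (t.getD (t.length - 1) 0 : ℚ)) /
            ((n : ℚ) + (t.getD 0 0 : ℚ))]) ∧
      IsDiscrepancyVector (addRight b)
        ((-1 + ((t.getD 0 0 : ℚ) + (t.getD (t.length - 1) 0 : ℚ)) /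
            ((n : ℚ) + (t.getD (t.length - 1) 0 : ℚ))) ::
          t.map fun ti => -1 + (ti : ℚ) / ((n : ℚ) + (t.getD (t.length - 1) 0 : ℚ))) := by
  simp only [bind_pure_comp, List.map_eq_map, List.map_map, Function.comp_def] at hδ ⊢
  obtain ⟨hδlen, hδeq⟩ := hδ
  have hn : (0:ℤ) < n := ha.trans han
  have hnQ : (0:ℚ) < (n:ℚ) := by exact_mod_cast hn
  set r := b.length with hrdef
  have hr : 0 < r := by
    rcases Nat.eq_zero_or_pos r with h | h
    · exfalso
      have ht : t = [] := List.length_eq_zero_iff.mp (by omega)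
      rw [ht] at hsum
      simp [List.getD] at hsum
      omega
    · exact h
  have hbne : b ≠ [] := List.length_pos_iff.mp hr
  rw [hlen] at hsum
  rw [hlen]
  have hB : ∀ i < r, (2:ℚ) ≤ ((b.getD i 0 : ℤ) : ℚ) := by
    intro i hi
    have h : 2 ≤ b.getD i 0 := by
      rw [List.getD_eq_getElem _ _ hi]
      exact h2 _ (List.getElem_mem _)
    exact_mod_cast h
  have E : ∀ i < r, ((b.getD i 0 : ℤ):ℚ) * ((t.getD i 0:ℤ):ℚ)
      = (if i = 0 then (n:ℚ) else ((t.getD (i-1) 0:ℤ):ℚ))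
        + (if i + 1 < r then ((t.getD (i+1) 0:ℤ):ℚ) else (n:ℚ)) := by
    intro i hi
    have h := hδeq i hi
    simp only [myGetD_map, hlen] at h
    rw [if_pos hi] at h
    by_cases h0 : i = 0
    · subst h0
      rw [if_pos rfl] at h
      rw [if_pos rfl]
      by_cases h1 : 0 + 1 < r
      · rw [if_pos h1] at h
        rw [if_pos h1]
        exact auxBwdL _ _ _ _ hnQ.ne' h
      · rw [if_neg h1] at h
        rw [if_neg h1]
        exact auxBwdLR _ _ _ hnQ.ne' h
    · rw [if_neg h0, if_pos (show i - 1 < r from by omega)] at h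
      rw [if_neg h0]
      by_cases h1 : i + 1 < r
      · rw [if_pos h1] at h
        rw [if_pos h1]
        exact auxBwd _ _ _ _ _ hnQ.ne' h
      · rw [if_neg h1] at h
        rw [if_neg h1]
        exact auxBwdR _ _ _ _ hnQ.ne' h
  have hposT : ∀ i < r, 0 < ((t.getD i 0 : ℤ) : ℚ) := by
    have hall := chain_pos r (fun i => ((b.getD i 0 : ℤ) : ℚ))
      (fun k => if 1 ≤ k ∧ k ≤ r then ((t.getD (k-1) 0 : ℤ) : ℚ) else (n:ℚ))
      hB
      (by rw [if_neg (by omega)]; exact hnQ)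
      (by intro k hk; rw [if_neg (by omega)]; exact hnQ)
      (by
        intro i hi
        have hE := E i hi
        rw [if_pos (show 1 ≤ i + 1 ∧ i + 1 ≤ r from by omega),
          show i + 1 - 1 = i from by omega]
        by_cases h0 : i = 0
        · subst h0
          rw [if_neg (show ¬(1 ≤ 0 ∧ 0 ≤ r) from by omega)]
          rw [if_pos rfl] at hE
          by_cases h1 : 0 + 1 < r
          · rw [if_pos h1] at hE
            rw [if_pos (show 1 ≤ 0 + 2 ∧ 0 + 2 ≤ r from by omega),
              show 0 + 2 - 1 = 0 + 1 from rfl]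
            exact hE
          · rw [if_neg h1] at hE
            rw [if_neg (show ¬(1 ≤ 0 + 2 ∧ 0 + 2 ≤ r) from by omega)]
            exact hE
        · rw [if_neg h0] at hE
          rw [if_pos (show 1 ≤ i ∧ i ≤ r from by omega),
            show i - 1 = i - 1 from rfl]
          by_cases h1 : i + 1 < r
          · rw [if_pos h1] at hE
            rw [if_pos (show 1 ≤ i + 2 ∧ i + 2 ≤ r from by omega),
              show i + 2 - 1 = i + 1 from by omega]
            exact hE
          · rw [if_neg h1] at hE
            rw [if_neg (show ¬(1 ≤ i + 2 ∧ i + 2 ≤ r) from by omega)]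
            exact hE)
    intro i hi
    have h := hall (i+1)
    rw [if_pos (show 1 ≤ i + 1 ∧ i + 1 ≤ r from by omega),
      show i + 1 - 1 = i from by omega] at h
    exact h
  have hT0 : 0 < ((t.getD 0 0 : ℤ):ℚ) := hposT 0 hr
  have hTr : 0 < ((t.getD (r-1) 0 : ℤ):ℚ) := hposT (r-1) (by omega)
  have hsumQ : ((t.getD 0 0 : ℤ):ℚ) + ((t.getD (r-1) 0 : ℤ):ℚ) = (n:ℚ) := by
    exact_mod_cast hsum
  have hmL : (n:ℚ) + ((t.getD 0 0 : ℤ):ℚ) ≠ 0 := ne_of_gt (add_pos hnQ hT0)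
  have hmR : (n:ℚ) + ((t.getD (r-1) 0 : ℤ):ℚ) ≠ 0 := ne_of_gt (add_pos hnQ hTr)
  have hD : ∀ (M w : ℚ) (j : ℕ),
      ((t.map fun ti : ℤ => -1 + (ti:ℚ)/M) ++ [w]).getD j 0
        = if j < r then -1 + ((t.getD j 0 : ℤ):ℚ)/M else if j = r then w else 0 := by
    intro M w j
    simp only [myGetD_append, myGetD_map, List.length_map, hlen]
    split_ifs <;> first | rfl | contradiction | (exfalso; omega)
  constructor
  · refine ⟨by simp [addLeft, hlen, hrdef], ?_⟩
    intro i hi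
    have hir : i < r + 1 := by simpa [addLeft] using hi
    have hA : ∀ j, (((addLeft b).getD j 0 : ℤ) : ℚ)
        = if j = 0 then ((b.getD 0 0 : ℤ):ℚ) + 1 else if j < r then ((b.getD j 0:ℤ):ℚ)
          else if j = r then 2 else 0 := by
      intro j
      simp only [addLeft, myGetD_append, myGetD_modifyHead _ _ _ _ hbne,
        List.length_modifyHead]
      split_ifs <;> first | contradiction | (exfalso; omega) | (push_cast; ring)
    simp only [hA, hD]
    by_cases hi0 : i = 0
    · subst hi0
      have hE := E 0 hr
      rw [if_pos rfl] at hE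
      by_cases h1 : 0 + 1 < r
      · rw [if_pos h1] at hE
        split_ifs <;>
          first
            | contradiction | (exfalso; omega)
            | exact auxFwdL _ _ _ _ hmL (by linear_combination hE)
      · rw [if_neg h1] at hE
        split_ifs <;>
          first
            | contradiction | (exfalso; omega)
            | exact auxFwdL _ _ _ _ hmL (by linear_combination hE - hsumQ)
    · by_cases hirr : i = r
      · subst hirr
        split_ifs <;>
          first
            | contradiction | (exfalso; omega)
            | exact auxFwdR _ _ _ _ hmL (by linear_combination hsumQ)
      · have hilt : i < r := by omega
        have hE := E i hilt
        rw [if_neg hi0] at hE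
        by_cases h1 : i + 1 < r
        · rw [if_pos h1] at hE
          split_ifs <;>
            first
              | contradiction | (exfalso; omega)
              | exact auxFwd _ _ _ _ _ hmL hE
        · rw [if_neg h1] at hE
          split_ifs <;>
            first
              | contradiction | (exfalso; omega)
              | exact auxFwd _ _ _ _ _ hmL (by linear_combination hE - hsumQ)
  · have hbr : b.reverse ≠ [] := by simpa using hbne
    have hA' : ∀ j, (((addRight b).getD j 0 : ℤ) : ℚ) = if j = 0 then 2
        else if j < r then ((b.getD (j-1) 0 : ℤ):ℚ)
        else if j = r then ((b.getD (r-1) 0:ℤ):ℚ) + 1 else 0 := by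
      intro j
      rcases j with _ | j
      · simp [addRight]
      · simp only [addRight, List.getD_cons_succ, myGetD_reverse,
          myGetD_modifyHead _ _ _ _ hbr, List.length_modifyHead, List.length_reverse]
        split_ifs <;>
          first
            | contradiction | (exfalso; omega)
            | (rw [show b.length - 1 - 0 = r - 1 from by omega]; push_cast; ring)
            | (rw [show b.length - 1 - (b.length - 1 - j) = j + 1 - 1 from by omega])
            | (push_cast; ring)
    have hD' : ∀ (M w : ℚ) (j : ℕ),
        ((w :: t.map fun ti : ℤ => -1 + (ti:ℚ)/M)).getD j 0
          = if j = 0 then w else if j < r + 1 then -1 + ((t.getD (j-1) 0 : ℤ):ℚ)/M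
            else 0 := by
      intro M w j
      rcases j with _ | j
      · simp
      · simp only [List.getD_cons_succ, myGetD_map, List.length_map, hlen, Nat.add_sub_cancel]
        split_ifs <;> first | rfl | contradiction | (exfalso; omega)
    refine ⟨by simp [addRight, hlen, hrdef], ?_⟩
    intro i hi
    have hir : i < r + 1 := by simpa [addRight] using hi
    simp only [hA', hD']
    by_cases hi0 : i = 0
    · subst hi0
      split_ifs <;>
        first
          | contradiction | (exfalso; omega)
          | exact auxFwdL _ _ _ _ hmR (by linear_combination hsumQ)
    · by_cases hirr : i = r
      · subst hirr
        by_cases hr1 : r = 1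
        · have hE := E 0 hr
          rw [if_pos rfl, if_neg (show ¬ 0 + 1 < r from by omega)] at hE
          have hs := hsumQ
          have hm := hmR
          rw [show r - 1 = 0 from by omega] at hs hm ⊢
          split_ifs <;>
            first
              | contradiction | (exfalso; omega)
              | exact auxFwdR _ _ _ _ hm (by linear_combination hE - hs)
        · have hE := E (r-1) (by omega)
          rw [if_neg (show ¬ r - 1 = 0 from by omega),
            if_neg (show ¬ r - 1 + 1 < r from by omega)] at hE
          split_ifs <;>
            first
              | contradiction | (exfalso; omega)
              | exact auxFwdR _ _ _ _ hmR (by linear_combination hE)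
      · have hilt : i < r := by omega
        by_cases hi1 : i = 1
        · subst hi1
          have hE := E 0 hr
          rw [if_pos rfl, if_pos (show 0 + 1 < r from by omega)] at hE
          rw [show (1:ℕ) - 1 = 0 from rfl, show 1 + 1 - 1 = 0 + 1 from rfl]
          split_ifs <;>
            first
              | contradiction | (exfalso; omega)
              | exact auxFwd _ _ _ _ _ hmR (by linear_combination hE - hsumQ)
        · have hE := E (i-1) (by omega)
          rw [if_neg (show ¬ i - 1 = 0 from by omega),
            if_pos (show i - 1 + 1 < r from by omega)] at hE
          rw [show i + 1 - 1 = i - 1 + 1 from by omega]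
          split_ifs <;>
            first
              | contradiction | (exfalso; omega)
              | exact auxFwd _ _ _ _ _ hmR hE
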